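/- With r_j and d_n as defined from binary sequences x and y (r_j = 3^(2^(j-1)) or 5^(2^(j-1)) according as the j-th entry is 0 or 1, d_n the product of the first n of them), if d_n(x) = d_n(y) for some n ≥ 1, then x_j = y_j for all 1 ≤ j ≤ n. -/
import Mathlib


def r (x : ℕ → Fin 2) (j : ℕ) : ℕ :=
  if x j = 0 then 3 ^ (2 ^ j) else 5 ^ (2 ^ j)

def d (x : ℕ → Fin 2) (n : ℕ) : ℕ :=
  ∏ j ∈ Finset.range n, r x j

lemma r_pos (x : ℕ → Fin 2) (j : ℕ) : 0 < r x j := by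
  unfold r; split <;> positivity

lemma d_ne_zero (x : ℕ → Fin 2) (n : ℕ) : d x n ≠ 0 := by
  unfold d
  exact Finset.prod_ne_zero_iff.mpr fun j _ => (r_pos x j).ne'

lemma v3_r_zero (x : ℕ → Fin 2) (j : ℕ) (h : x j = 0) :
    padicValNat 3 (r x j) = 2 ^ j := by
  unfold r; rw [if_pos h]
  exact padicValNat.prime_pow _

lemma v3_r_one (x : ℕ → Fin 2) (j : ℕ) (h : x j ≠ 0) :
    padicValNat 3 (r x j) = 0 := by
  unfold r; rw [if_neg h]
  apply padicValNat.eq_zero_of_not_dvd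
  intro hdvd
  have := Nat.Prime.dvd_of_dvd_pow (p := 3) (by norm_num) hdvd
  norm_num at this

lemma v3_d_lt (x : ℕ → Fin 2) (n : ℕ) : padicValNat 3 (d x n) < 2 ^ n := by
  induction n with
  | zero => simp [d]
  | succ n ih =>
    have hd : d x (n + 1) = d x n * r x n := Finset.prod_range_succ _ _
    rw [hd, padicValNat.mul (d_ne_zero x n) (r_pos x n).ne']
    rcases eq_or_ne (x n) 0 with h | h
    · rw [v3_r_zero x n h]
      have : (2:ℕ) ^ (n + 1) = 2 ^ n + 2 ^ n := by ring
      omega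
    · rw [v3_r_one x n h]
      have : (2:ℕ) ^ n ≤ 2 ^ (n + 1) := Nat.pow_le_pow_right (by norm_num) (by omega)
      omega

lemma main_aux (x y : ℕ → Fin 2) : ∀ n, d x n = d y n → ∀ j < n, x j = y j := by
  intro n
  induction n with
  | zero => intro _ j hj; omega
  | succ n ih =>
    intro h j hj
    have hdx : d x (n + 1) = d x n * r x n := Finset.prod_range_succ _ _
    have hdy : d y (n + 1) = d y n * r y n := Finset.prod_range_succ _ _
    have hbit : x n = y n := by
      by_contra hne
      have hv : padicValNat 3 (d x (n+1)) = padicValNat 3 (d y (n+1)) := by rw [h]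
      rw [hdx, hdy, padicValNat.mul (d_ne_zero x n) (r_pos x n).ne',
        padicValNat.mul (d_ne_zero y n) (r_pos y n).ne'] at hv
      have hx := v3_d_lt x n
      have hy := v3_d_lt y n
      rcases eq_or_ne (x n) 0 with h0 | h0
      · have h1 : y n ≠ 0 := fun hc => hne (h0.trans hc.symm)
        rw [v3_r_zero x n h0, v3_r_one y n h1] at hv
        omega
      · have h1 : y n = 0 := by
          have hxv := (x n).isLt
          have hyv := (y n).isLt
          omega
        rw [v3_r_one x n h0, v3_r_zero y n h1] at hv
        omega
    have hr : r x n = r y n := by unfold r; rw [hbit]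
    have hdn : d x n = d y n := by
      have : d x n * r x n = d y n * r x n := by rw [← hdx]; rw [hr, ← hdy]; exact h
      exact Nat.eq_of_mul_eq_mul_right (r_pos x n) this
    rcases lt_or_eq_of_le (Nat.lt_succ_iff.mp hj) with hj' | hj'
    · exact ih hdn j hj'
    · rw [hj']; exact hbit

/-- If `d_n(x) = d_n(y)` for some `n ≥ 1`, then the first `n` bits of `x` and `y` agree. -/
theorem stmt6 (x y : ℕ → Fin 2) (n : ℕ) (hn : 1 ≤ n) (h : d x n = d y n) :
    ∀ j < n, x j = y j := by
  exact main_aux x y n h
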